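/- arXiv:2406.16668 — 6 statements merged into one kernel-verified Lean document; each statement's English description precedes it below -/
import Mathlib

section
/- For the path P_n with n ≥ 2 vertices, the 1-nearly vertex independence number equals ⌊(n+2)/2⌋. -/
open SimpleGraph

/-- The number of elements of `Finset.range n` that are `0` or odd is `(n+2)/2`. -/
lemma count_lemma : ∀ n : ℕ, 1 ≤ n →
    ((Finset.range n).filter (fun m => m = 0 ∨ m % 2 = 1)).card = (n + 2) / 2 := by
  intro n
  induction n with
  | zero => omega
  | succ n ih =>
    intro _
    rw [Finset.range_add_one, Finset.filter_insert]
    rcases Nat.eq_zero_or_pos n with h | h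
    · subst h; simp
    · have hIH := ih h
      by_cases hp : (n = 0 ∨ n % 2 = 1)
      · rw [if_pos hp, Finset.card_insert_of_notMem (by simp)]
        omega
      · rw [if_neg hp]; omega

/-- If the set of edges of `P_n` induced by `s` is exactly `{s(u,v)}` with `u+1 = v`,
then `s` has at most `(n+2)/2` elements. -/
lemma upper_aux (n : ℕ) (s : Set (Fin n)) (u v : Fin n) (huv : u.val + 1 = v.val)
    (hset : {e ∈ (SimpleGraph.pathGraph n).edgeSet | ∀ w ∈ e, w ∈ s} = {s(u, v)}) :
    s.ncard ≤ (n + 2) / 2 := by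
  have hmem : s(u, v) ∈ {e ∈ (SimpleGraph.pathGraph n).edgeSet | ∀ w ∈ e, w ∈ s} := by
    rw [hset]; exact rfl
  have hu : u ∈ s := hmem.2 u (by simp)
  have hv : v ∈ s := hmem.2 v (by simp)
  set A : Set ℕ := Fin.val '' s with hA
  set B : Set ℕ := (· + 1) '' A with hB
  have hAfin : A.Finite := (Set.toFinite s).image _
  have hBfin : B.Finite := hAfin.image _
  have hAcard : A.ncard = s.ncard := Set.ncard_image_of_injective _ Fin.val_injective
  have hBcard : B.ncard = A.ncard := Set.ncard_image_of_injective _ (add_left_injective 1)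
  have hInter : A ∩ B = {(v.val : ℕ)} := by
    ext x
    constructor
    · rintro ⟨⟨a, ha, rfl⟩, ⟨y, ⟨b, hb, rfl⟩, hx⟩⟩
      have hadj : (SimpleGraph.pathGraph n).Adj b a := pathGraph_adj.mpr (Or.inl hx)
      have hme : s(b, a) ∈ {e ∈ (SimpleGraph.pathGraph n).edgeSet | ∀ w ∈ e, w ∈ s} := by
        refine ⟨hadj, ?_⟩
        intro w hw
        rcases Sym2.mem_iff.mp hw with rfl | rfl
        · exact hb
        · exact ha
      rw [hset, Set.mem_singleton_iff, Sym2.eq_iff] at hme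
      rcases hme with ⟨h1, h2⟩ | ⟨h1, h2⟩
      · subst h2; rfl
      · exfalso; subst h1; subst h2; simp only at hx; omega
    · rintro rfl
      exact ⟨⟨v, hv, rfl⟩, ⟨u.val, ⟨u, hu, rfl⟩, huv⟩⟩
  have hUnion : (A ∪ B).ncard ≤ n + 1 := by
    have hsub : A ∪ B ⊆ ↑(Finset.range (n + 1)) := by
      rintro x (⟨a, ha, rfl⟩ | ⟨y, ⟨a, ha, rfl⟩, rfl⟩) <;>
        simp only [Finset.coe_range, Set.mem_Iio] <;> omega
    calc (A ∪ B).ncard ≤ (↑(Finset.range (n+1)) : Set ℕ).ncard :=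
          Set.ncard_le_ncard hsub (Finset.range (n+1)).finite_toSet
      _ = n + 1 := by rw [Set.ncard_coe_finset, Finset.card_range]
  have hkey := Set.ncard_union_add_ncard_inter A B hAfin hBfin
  rw [hInter, Set.ncard_singleton, hAcard, hBcard, hAcard] at hkey
  omega

/-- A set of `(n+2)/2` vertices of `P_n` inducing exactly one edge. -/
lemma lower_aux (n : ℕ) (hn : 2 ≤ n) :
    ∃ s : Set (Fin n), s.ncard = (n + 2) / 2 ∧
      {e ∈ (SimpleGraph.pathGraph n).edgeSet | ∀ v ∈ e, v ∈ s}.ncard = 1 := by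
  set s : Set (Fin n) := {v : Fin n | v.val = 0 ∨ v.val % 2 = 1} with hs
  refine ⟨s, ?_, ?_⟩
  · have himg : Fin.val '' s = ↑((Finset.range n).filter (fun m => m = 0 ∨ m % 2 = 1)) := by
      ext x
      simp only [Set.mem_image, Finset.coe_filter, Finset.mem_range, Set.mem_setOf_eq, hs]
      constructor
      · rintro ⟨v, hv, rfl⟩; exact ⟨v.isLt, hv⟩
      · rintro ⟨hx, hp⟩; exact ⟨⟨x, hx⟩, hp, rfl⟩
    have := Set.ncard_image_of_injective s (Fin.val_injective (n := n))
    rw [himg, Set.ncard_coe_finset, count_lemma n (by omega)] at this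
    exact this.symm
  · have hone : {e ∈ (SimpleGraph.pathGraph n).edgeSet | ∀ v ∈ e, v ∈ s} =
        {s((⟨0, by omega⟩ : Fin n), (⟨1, by omega⟩ : Fin n))} := by
      ext e
      induction e using Sym2.ind with
      | _ a b =>
        simp only [Set.mem_setOf_eq, SimpleGraph.mem_edgeSet, pathGraph_adj,
          Sym2.mem_iff, Set.mem_singleton_iff, Sym2.eq_iff,
          forall_eq_or_imp, forall_eq, hs]
        simp only [Fin.ext_iff]
        omega
    rw [hone]
    exact Set.ncard_singleton _

/-- The 1-nearly vertex independence number: the maximum cardinality of a set of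
vertices whose induced subgraph has exactly one edge (0 if none exists). -/
noncomputable def alpha1 {V : Type*} (G : SimpleGraph V) : ℕ :=
  sSup {k : ℕ | ∃ s : Set V, s.ncard = k ∧ {e ∈ G.edgeSet | ∀ v ∈ e, v ∈ s}.ncard = 1}

theorem alpha1_pathGraph (n : ℕ) (hn : 2 ≤ n) :
    alpha1 (SimpleGraph.pathGraph n) = (n + 2) / 2 := by
  have hbound : ∀ k ∈ {k : ℕ | ∃ s : Set (Fin n), s.ncard = k ∧
      {e ∈ (SimpleGraph.pathGraph n).edgeSet | ∀ v ∈ e, v ∈ s}.ncard = 1},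
      k ≤ (n + 2) / 2 := by
    rintro k ⟨s, rfl, h1⟩
    obtain ⟨e₀, he₀⟩ := Set.ncard_eq_one.mp h1
    induction e₀ using Sym2.ind with
    | _ u v =>
      have hmem : s(u, v) ∈ {e ∈ (SimpleGraph.pathGraph n).edgeSet | ∀ w ∈ e, w ∈ s} := by
        rw [he₀]; exact rfl
      rcases pathGraph_adj.mp hmem.1 with h | h
      · exact upper_aux n s u v h he₀
      · exact upper_aux n s v u h (by rw [he₀, Sym2.eq_swap])
  unfold alpha1
  apply le_antisymm
  · exact csSup_le ⟨(n + 2) / 2, lower_aux n hn⟩ hbound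
  · exact le_csSup ⟨(n + 2) / 2, hbound⟩ (lower_aux n hn)
end

section
/- For the cycle C_n with n ≥ 3 vertices, the 1-nearly vertex independence number equals ⌊(n+1)/2⌋. -/
section aux

variable {n : ℕ} [NeZero n]

lemma cyc_adj (hn : 3 ≤ n) {u v : Fin n} :
    (SimpleGraph.cycleGraph n).Adj u v ↔ u = v + 1 ∨ v = u + 1 := by
  rw [SimpleGraph.cycleGraph_adj']
  have h1 : ((1 : Fin n) : ℕ) = 1 := by
    rw [Fin.val_one']; exact Nat.mod_eq_of_lt (by omega)
  have e1 : ∀ a b : Fin n, ((a - b : Fin n) : ℕ) = 1 ↔ a = b + 1 := by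
    intro a b
    rw [← h1, ← Fin.ext_iff, sub_eq_iff_eq_add, add_comm]
  rw [e1, e1]

lemma succ_inj : Function.Injective (fun i : Fin n => i + 1) := by
  intro a b h
  simpa using add_left_injective (1 : Fin n) h

lemma edge_mk_inj (hn : 3 ≤ n) {i j : Fin n}
    (h : s(i, i + 1) = s(j, j + 1)) : i = j := by
  rw [Sym2.eq_iff] at h
  rcases h with ⟨h1, _⟩ | ⟨h1, h2⟩
  · exact h1
  · exfalso
    have h3 : i + 1 + 1 = i + 0 := by rw [h2, ← h1, add_zero]
    have h4 : (1 : Fin n) + 1 = 0 := by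
      have := add_left_cancel (add_assoc i 1 1 ▸ h3)
      exact this
    have h5 := congrArg Fin.val h4
    have e1 : 1 % n = 1 := Nat.mod_eq_of_lt (by omega)
    rw [Fin.val_add, Fin.val_one', Fin.val_zero, e1, Nat.mod_eq_of_lt (by omega)] at h5
    omega

lemma edge_char (hn : 3 ≤ n) (s : Set (Fin n)) :
    {e ∈ (SimpleGraph.cycleGraph n).edgeSet | ∀ v ∈ e, v ∈ s}
      = (fun i : Fin n => s(i, i + 1)) '' {i : Fin n | i ∈ s ∧ i + 1 ∈ s} := by
  ext e
  constructor
  · rintro ⟨he, hv⟩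
    induction e with
    | _ a b =>
      rw [SimpleGraph.mem_edgeSet, cyc_adj hn] at he
      rcases he with h | h
      · refine ⟨b, ⟨hv b (by simp), ?_⟩, ?_⟩
        · rw [← h]; exact hv a (by simp)
        · simp [← h, Sym2.eq_swap]
      · exact ⟨a, ⟨hv a (by simp), by rw [← h]; exact hv b (by simp)⟩, by simp [← h]⟩
  · rintro ⟨i, ⟨hi, hi1⟩, rfl⟩
    refine ⟨?_, ?_⟩
    · rw [SimpleGraph.mem_edgeSet, cyc_adj hn]; right; rfl
    · intro v hv
      rw [Sym2.mem_iff] at hv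
      rcases hv with rfl | rfl <;> assumption

lemma edge_count (hn : 3 ≤ n) (s : Set (Fin n)) :
    {e ∈ (SimpleGraph.cycleGraph n).edgeSet | ∀ v ∈ e, v ∈ s}.ncard
      = {i : Fin n | i ∈ s ∧ i + 1 ∈ s}.ncard := by
  rw [edge_char hn, Set.ncard_image_of_injective _ (fun i j h => edge_mk_inj hn h)]

lemma upper_bound (hn : 3 ≤ n) (s : Set (Fin n))
    (h : {e ∈ (SimpleGraph.cycleGraph n).edgeSet | ∀ v ∈ e, v ∈ s}.ncard = 1) :
    s.ncard ≤ (n + 1) / 2 := by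
  rw [edge_count hn] at h
  obtain ⟨i₀, hi₀⟩ := Set.ncard_eq_one.mp h
  set t := (fun i : Fin n => i + 1) '' s with ht
  have htcard : t.ncard = s.ncard := Set.ncard_image_of_injective _ succ_inj
  have hsub : s ∩ t ⊆ {i₀ + 1} := by
    rintro j ⟨hjs, i, his, rfl⟩
    have : i ∈ ({i₀} : Set (Fin n)) := by rw [← hi₀]; exact ⟨his, hjs⟩
    simp_all
  have h1 : (s ∩ t).ncard ≤ 1 := by
    simpa using Set.ncard_le_ncard hsub (Set.finite_singleton _)
  have h2 : (s ∪ t).ncard ≤ n := by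
    have := Set.ncard_le_ncard (Set.subset_univ (s ∪ t)) (Set.toFinite _)
    rwa [Set.ncard_univ, Nat.card_eq_fintype_card, Fintype.card_fin] at this
  have h3 := Set.ncard_union_add_ncard_inter s t (Set.toFinite _) (Set.toFinite _)
  omega

lemma val_succ {i : Fin n} (hlt : i.val + 1 < n) : ((i + 1 : Fin n) : ℕ) = i.val + 1 := by
  have e1 : 1 % n = 1 := Nat.mod_eq_of_lt (by omega)
  rw [Fin.val_add, Fin.val_one', e1, Nat.mod_eq_of_lt (by omega)]

lemma lower_set (hn : 3 ≤ n) :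
    ∃ s : Set (Fin n), s.ncard = (n + 1) / 2 ∧
      {e ∈ (SimpleGraph.cycleGraph n).edgeSet | ∀ v ∈ e, v ∈ s}.ncard = 1 := by
  set s : Set (Fin n) := {i : Fin n | i.val = 0 ∨ (i.val % 2 = 1 ∧ i.val + 1 < n)} with hs
  have hmem : ∀ i : Fin n, i ∈ s ↔ i.val = 0 ∨ (i.val % 2 = 1 ∧ i.val + 1 < n) :=
    fun i => Iff.rfl
  refine ⟨s, ?_, ?_⟩
  · -- cardinality
    have hb : ∀ j : Fin ((n + 1) / 2), (if j.val = 0 then 0 else 2 * j.val - 1) < n := by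
      intro j; have := j.isLt; split <;> omega
    set f : Fin ((n + 1) / 2) → Fin n := fun j => ⟨_, hb j⟩ with hf
    have hval : ∀ j, (f j).val = if j.val = 0 then 0 else 2 * j.val - 1 := fun j => rfl
    have hinj : Function.Injective f := by
      intro a b hab
      have h := congrArg Fin.val hab
      rw [hval, hval] at h
      apply Fin.ext
      split at h <;> split at h <;> omega
    have himg : f '' Set.univ = s := by
      ext i
      constructor
      · rintro ⟨j, -, rfl⟩
        rw [hmem, hval]
        have := j.isLt
        split
        · left; rfl
        · right; constructor <;> omega
      · intro hi
        rw [hmem] at hi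
        rcases hi with h0 | ⟨hodd, hlt⟩
        · refine ⟨⟨0, by omega⟩, trivial, ?_⟩
          apply Fin.ext; rw [hval]; simp [h0]
        · refine ⟨⟨(i.val + 1) / 2, by omega⟩, trivial, ?_⟩
          apply Fin.ext; rw [hval]
          split <;> simp_all <;> omega
    have := Set.ncard_image_of_injective (Set.univ : Set (Fin ((n + 1) / 2))) hinj
    rw [himg] at this
    simpa [Set.ncard_univ] using this
  · rw [edge_count hn]
    have hT : {i : Fin n | i ∈ s ∧ i + 1 ∈ s} = {0} := by
      ext i
      simp only [Set.mem_setOf_eq, Set.mem_singleton_iff]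
      constructor
      · rintro ⟨hi, hi1⟩
        rw [hmem] at hi hi1
        rcases hi with h0 | ⟨hodd, hlt⟩
        · exact Fin.ext h0
        · exfalso
          rw [val_succ hlt] at hi1
          omega
      · rintro rfl
        have h1 : ((0 + 1 : Fin n) : ℕ) = 1 := by
          rw [val_succ] <;> simp [Fin.val_zero] <;> omega
        constructor
        · rw [hmem]; left; rfl
        · rw [hmem, h1]; right; omega
    rw [hT, Set.ncard_singleton]

end aux

theorem alpha1_cycleGraph (n : ℕ) (hn : 3 ≤ n) :
    alpha1 (SimpleGraph.cycleGraph n) = (n + 1) / 2 := by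
  haveI : NeZero n := ⟨by omega⟩
  obtain ⟨s₀, hs₀c, hs₀e⟩ := lower_set hn
  have hmem : (n + 1) / 2 ∈
      {k : ℕ | ∃ s : Set (Fin n), s.ncard = k ∧
        {e ∈ (SimpleGraph.cycleGraph n).edgeSet | ∀ v ∈ e, v ∈ s}.ncard = 1} :=
    ⟨s₀, hs₀c, hs₀e⟩
  have hub : ∀ k ∈ {k : ℕ | ∃ s : Set (Fin n), s.ncard = k ∧
      {e ∈ (SimpleGraph.cycleGraph n).edgeSet | ∀ v ∈ e, v ∈ s}.ncard = 1},
      k ≤ (n + 1) / 2 := by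
    rintro k ⟨s, rfl, hs⟩
    exact upper_bound hn s hs
  exact le_antisymm (csSup_le ⟨_, hmem⟩ hub) (le_csSup ⟨_, hub⟩ hmem)
end

section
/- If G is a connected graph of order n ≥ 2, then α₁(G) ≥ 2, with equality if and only if G is a good graph, i.e., for every edge uv of G, N[u] ∪ N[v] = V(G). -/
/-- A graph is good if for every edge uv, N[u] ∪ N[v] = V(G). -/
def IsGood {V : Type*} (G : SimpleGraph V) : Prop :=
  ∀ ⦃u v : V⦄, G.Adj u v → ∀ w : V, w = u ∨ w = v ∨ G.Adj u w ∨ G.Adj v w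

lemma edges_pair {V : Type*} (G : SimpleGraph V) {u v : V} (h : G.Adj u v) :
    {e ∈ G.edgeSet | ∀ x ∈ e, x ∈ ({u, v} : Set V)} = {s(u, v)} := by
  ext e
  induction e using Sym2.ind with
  | _ a b =>
    simp only [Set.mem_setOf_eq, SimpleGraph.mem_edgeSet, Sym2.mem_iff, Set.mem_insert_iff,
      Set.mem_singleton_iff, Sym2.eq_iff]
    constructor
    · rintro ⟨hab, hmem⟩
      have ha := hmem a (Or.inl rfl)
      have hb := hmem b (Or.inr rfl)
      rcases ha with rfl | rfl <;> rcases hb with rfl | rfl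
      · exact absurd hab (G.irrefl)
      · exact Or.inl ⟨rfl, rfl⟩
      · exact Or.inr ⟨rfl, rfl⟩
      · exact absurd hab (G.irrefl)
    · rintro (⟨rfl, rfl⟩ | ⟨rfl, rfl⟩)
      · exact ⟨h, by tauto⟩
      · exact ⟨h.symm, by tauto⟩

lemma edges_triple {V : Type*} (G : SimpleGraph V) {u v w : V} (h : G.Adj u v)
    (hwu : w ≠ u) (hwv : w ≠ v) (huw : ¬ G.Adj u w) (hvw : ¬ G.Adj v w) :
    {e ∈ G.edgeSet | ∀ x ∈ e, x ∈ ({u, v, w} : Set V)} = {s(u, v)} := by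
  ext e
  induction e using Sym2.ind with
  | _ a b =>
    simp only [Set.mem_setOf_eq, SimpleGraph.mem_edgeSet, Sym2.mem_iff, Set.mem_insert_iff,
      Set.mem_singleton_iff, Sym2.eq_iff]
    constructor
    · rintro ⟨hab, hmem⟩
      have ha := hmem a (Or.inl rfl)
      have hb := hmem b (Or.inr rfl)
      rcases ha with rfl | rfl | rfl <;> rcases hb with rfl | rfl | rfl
      · exact absurd hab (G.irrefl)
      · exact Or.inl ⟨rfl, rfl⟩
      · exact absurd hab huw
      · exact Or.inr ⟨rfl, rfl⟩
      · exact absurd hab (G.irrefl)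
      · exact absurd hab hvw
      · exact absurd hab.symm huw
      · exact absurd hab.symm hvw
      · exact absurd hab (G.irrefl)
    · rintro (⟨rfl, rfl⟩ | ⟨rfl, rfl⟩)
      · exact ⟨h, by tauto⟩
      · exact ⟨h.symm, by tauto⟩

theorem alpha1_connected_lower_bound {V : Type*} [Fintype V] (G : SimpleGraph V)
    (hn : 2 ≤ Fintype.card V) (hc : G.Connected) :
    2 ≤ alpha1 G ∧ (alpha1 G = 2 ↔ IsGood G) := by
  classical
  set S := {k : ℕ | ∃ s : Set V, s.ncard = k ∧ {e ∈ G.edgeSet | ∀ v ∈ e, v ∈ s}.ncard = 1}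
    with hS
  have hbdd : BddAbove S := by
    refine ⟨Fintype.card V, fun k hk => ?_⟩
    obtain ⟨s, rfl, -⟩ := hk
    calc s.ncard ≤ (Set.univ : Set V).ncard :=
          Set.ncard_le_ncard (Set.subset_univ s) Set.finite_univ
      _ = Fintype.card V := by rw [Set.ncard_univ, Nat.card_eq_fintype_card]
  obtain ⟨x, y, hxy⟩ := Fintype.exists_pair_of_one_lt_card (α := V) (by omega)
  obtain ⟨p⟩ := hc.preconnected x y
  have hadj : G.Adj x (p.getVert 1) := p.adj_snd (p.not_nil_of_ne hxy)
  have hmem2 : ∀ {u v : V}, G.Adj u v → 2 ∈ S := by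
    intro u v h
    refine ⟨{u, v}, Set.ncard_pair h.ne, ?_⟩
    rw [edges_pair G h]
    exact Set.ncard_singleton _
  have h2 : 2 ≤ alpha1 G := le_csSup hbdd (hmem2 hadj)
  refine ⟨h2, ?_, ?_⟩
  · intro heq u v huv w
    by_contra hw
    push_neg at hw
    obtain ⟨hwu, hwv, huw, hvw⟩ := hw
    have h3 : 3 ∈ S := by
      refine ⟨{u, v, w}, ?_, ?_⟩
      · rw [Set.ncard_insert_of_notMem (by simp [huv.ne, hwu.symm]),
          Set.ncard_pair hwv.symm]
      · rw [edges_triple G huv hwu hwv huw hvw]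
        exact Set.ncard_singleton _
    have := le_csSup hbdd h3
    rw [show alpha1 G = sSup S from rfl] at heq
    omega
  · intro hg
    refine le_antisymm ?_ h2
    refine csSup_le ⟨2, hmem2 hadj⟩ ?_
    rintro k ⟨s, rfl, hone⟩
    obtain ⟨e, he⟩ := Set.ncard_eq_one.mp hone
    have hmem : e ∈ {e ∈ G.edgeSet | ∀ v ∈ e, v ∈ s} := by rw [he]; rfl
    induction e using Sym2.ind with
    | _ u v =>
      obtain ⟨huv, hin⟩ := hmem
      rw [SimpleGraph.mem_edgeSet] at huv
      have hu : u ∈ s := hin u (by simp)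
      have hv : v ∈ s := hin v (by simp)
      have hsub : s ⊆ ({u, v} : Set V) := by
        intro w hws
        by_contra hwmem
        simp only [Set.mem_insert_iff, Set.mem_singleton_iff] at hwmem
        push_neg at hwmem
        obtain ⟨hwu, hwv⟩ := hwmem
        rcases hg huv w with h | h | h | h
        · exact hwu h
        · exact hwv h
        · have : s(u, w) ∈ {e ∈ G.edgeSet | ∀ v ∈ e, v ∈ s} := by
            refine ⟨by rwa [SimpleGraph.mem_edgeSet], ?_⟩
            intro z hz
            rcases Sym2.mem_iff.mp hz with rfl | rfl
            · exact hu
            · exact hws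
          rw [he, Set.mem_singleton_iff, Sym2.eq_iff] at this
          rcases this with ⟨-, rfl⟩ | ⟨rfl, rfl⟩
          · exact hwv rfl
          · exact hwu rfl
        · have : s(v, w) ∈ {e ∈ G.edgeSet | ∀ v ∈ e, v ∈ s} := by
            refine ⟨by rwa [SimpleGraph.mem_edgeSet], ?_⟩
            intro z hz
            rcases Sym2.mem_iff.mp hz with rfl | rfl
            · exact hv
            · exact hws
          rw [he, Set.mem_singleton_iff, Sym2.eq_iff] at this
          rcases this with ⟨rfl, -⟩ | ⟨-, rfl⟩
          · exact G.irrefl huv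
          · exact hwu rfl
      calc s.ncard ≤ ({u, v} : Set V).ncard :=
            Set.ncard_le_ncard hsub (Set.toFinite _)
        _ = 2 := Set.ncard_pair huv.ne
end

section
/- For n ≥ 3, the broom graph B³_n (a path on 3 vertices with n−3 extra leaves attached to one endpoint of the path) satisfies α₁(B³_n) = n − 1. -/
/-- The graph obtained from the star K_{1,n-1} (center 0) by adding the edge
between the leaves 1 and 2. -/
def unicyclicStar (n : ℕ) : SimpleGraph (Fin n) where
  Adj i j := i ≠ j ∧ (i.val = 0 ∨ j.val = 0 ∨
    ((i.val = 1 ∨ i.val = 2) ∧ (j.val = 1 ∨ j.val = 2)))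
  symm := ⟨by rintro i j ⟨h1, h2⟩; exact ⟨h1.symm, by tauto⟩⟩
  loopless := ⟨by rintro i ⟨h1, _⟩; exact h1 rfl⟩

/-- The broom B³ₙ: the path 0-1-2 together with n-3 pendant leaves attached to
the end-vertex 0. -/
def broom3 (n : ℕ) : SimpleGraph (Fin n) where
  Adj i j := i ≠ j ∧ ((i.val = 0 ∧ j.val = 1) ∨ (i.val = 1 ∧ j.val = 0) ∨
    (i.val = 1 ∧ j.val = 2) ∨ (i.val = 2 ∧ j.val = 1) ∨
    (i.val = 0 ∧ 3 ≤ j.val) ∨ (j.val = 0 ∧ 3 ≤ i.val))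
  symm := ⟨by rintro i j ⟨h1, h2⟩; exact ⟨h1.symm, by tauto⟩⟩
  loopless := ⟨by rintro i ⟨h1, _⟩; exact h1 rfl⟩

theorem alpha1_broom3 (n : ℕ) (hn : 3 ≤ n) :
    alpha1 (broom3 n) = n - 1 := by
  have h0 : 0 < n := by omega
  set a0 : Fin n := ⟨0, by omega⟩
  set a1 : Fin n := ⟨1, by omega⟩
  set a2 : Fin n := ⟨2, by omega⟩
  have hmem : (n - 1) ∈ {k : ℕ | ∃ s : Set (Fin n), s.ncard = k ∧
      {e ∈ (broom3 n).edgeSet | ∀ v ∈ e, v ∈ s}.ncard = 1} := by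
    refine ⟨{i : Fin n | i.val ≠ 0}, ?_, ?_⟩
    · have : {i : Fin n | i.val ≠ 0} = ({a0} : Set (Fin n))ᶜ := by
        ext i; simp [a0, Fin.ext_iff]
      rw [this]
      have := Set.ncard_add_ncard_compl ({a0} : Set (Fin n))
      simp [Nat.card_eq_fintype_card] at this
      omega
    · have : {e ∈ (broom3 n).edgeSet | ∀ v ∈ e, v ∈ {i : Fin n | i.val ≠ 0}}
          = {s(a1, a2)} := by
        ext e
        induction e using Sym2.ind with
        | _ a b =>
          simp only [Set.mem_setOf_eq, SimpleGraph.mem_edgeSet, Set.mem_singleton_iff]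
          constructor
          · rintro ⟨⟨hne, hadj⟩, hall⟩
            have ha := hall a (by simp)
            have hb := hall b (by simp)
            have : (a.val = 1 ∧ b.val = 2) ∨ (a.val = 2 ∧ b.val = 1) := by
              omega
            rcases this with ⟨h1, h2⟩ | ⟨h1, h2⟩
            · have : a = a1 := by simp [a1, Fin.ext_iff, h1]
              have hb2 : b = a2 := by simp [a2, Fin.ext_iff, h2]
              rw [this, hb2]
            · have : a = a2 := by simp [a2, Fin.ext_iff, h1]
              have hb2 : b = a1 := by simp [a1, Fin.ext_iff, h2]
              rw [this, hb2, Sym2.eq_swap]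
          · intro h
            rw [Sym2.eq_iff] at h
            rcases h with ⟨ha, hb⟩ | ⟨ha, hb⟩ <;> subst ha <;> subst hb
            · refine ⟨⟨by simp [a1, a2, Fin.ext_iff], by tauto⟩, ?_⟩
              intro v hv
              rcases Sym2.mem_iff.mp hv with rfl | rfl <;> simp [a1, a2]
            · refine ⟨⟨by simp [a1, a2, Fin.ext_iff], by tauto⟩, ?_⟩
              intro v hv
              rcases Sym2.mem_iff.mp hv with rfl | rfl <;> simp [a1, a2]
      rw [this, Set.ncard_singleton]
  have hub : ∀ k ∈ {k : ℕ | ∃ s : Set (Fin n), s.ncard = k ∧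
      {e ∈ (broom3 n).edgeSet | ∀ v ∈ e, v ∈ s}.ncard = 1}, k ≤ n - 1 := by
    rintro k ⟨s, rfl, hcard⟩
    by_contra hk
    push_neg at hk
    have hle : s.ncard ≤ n := by
      have := Set.ncard_le_ncard (Set.subset_univ s) (Set.finite_univ)
      simpa [Set.ncard_univ, Nat.card_eq_fintype_card] using this
    have hsn : s.ncard = n := by omega
    have hsu : s = Set.univ := by
      exact Set.eq_of_subset_of_ncard_le (Set.subset_univ s)
        (by simp [hsn, Set.ncard_univ, Nat.card_eq_fintype_card]) Set.finite_univ
    have he1 : s(a0, a1) ∈ {e ∈ (broom3 n).edgeSet | ∀ v ∈ e, v ∈ s} := by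
      refine ⟨?_, by simp [hsu]⟩
      simp only [SimpleGraph.mem_edgeSet]
      exact ⟨by simp [a0, a1, Fin.ext_iff], by simp [a0, a1]⟩
    have he2 : s(a1, a2) ∈ {e ∈ (broom3 n).edgeSet | ∀ v ∈ e, v ∈ s} := by
      refine ⟨?_, by simp [hsu]⟩
      simp only [SimpleGraph.mem_edgeSet]
      exact ⟨by simp [a1, a2, Fin.ext_iff], by simp [a1, a2]⟩
    have hne : s(a0, a1) ≠ s(a1, a2) := by
      simp [Sym2.eq_iff, a0, a1, a2, Fin.ext_iff]
    have : 1 < {e ∈ (broom3 n).edgeSet | ∀ v ∈ e, v ∈ s}.ncard :=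
      Set.one_lt_ncard_iff (Set.toFinite _) |>.mpr ⟨_, _, he1, he2, hne⟩
    omega
  have h1 : alpha1 (broom3 n) ≤ n - 1 := csSup_le ⟨_, hmem⟩ hub
  have h2 : n - 1 ≤ alpha1 (broom3 n) := le_csSup ⟨n - 1, hub⟩ hmem
  omega
end

section
/- If G is a connected graph of order n ≥ 3 containing a cycle and α₁(G) = n − 1, then every cycle of G is a triangle. -/
open SimpleGraph in
/-- In any walk, the number of edges containing `v`, plus 1 for each endpoint equal to `v`,
is at most twice the number of occurrences of `v` in the support. -/
lemma walk_countP_edges {V : Type*} [DecidableEq V] (G : SimpleGraph V) (v : V) :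
    ∀ {a b : V} (p : G.Walk a b),
      p.edges.countP (fun e => decide (v ∈ e)) + (if a = v then 1 else 0)
        + (if b = v then 1 else 0) ≤ 2 * p.support.count v := by
  intro a b p
  induction p with
  | nil =>
    simp only [SimpleGraph.Walk.edges_nil, List.countP_nil, SimpleGraph.Walk.support_nil,
      List.count_cons, List.count_nil, beq_iff_eq]
    split_ifs <;> first | omega | simp_all
  | @cons a c b h q ih =>
    have hac : a ≠ c := G.ne_of_adj h
    rw [SimpleGraph.Walk.edges_cons, List.countP_cons, SimpleGraph.Walk.support_cons,
      List.count_cons]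
    simp only [decide_eq_true_eq, Sym2.mem_iff, beq_iff_eq] at ih ⊢
    split_ifs at ih ⊢ <;> first | omega | tauto | simp_all
  
theorem cycles_are_triangles (n : ℕ) (hn : 3 ≤ n) (G : SimpleGraph (Fin n))
    (hc : G.Connected) (hcyc : ∃ (u : Fin n) (c : G.Walk u u), c.IsCycle)
    (ha : alpha1 G = n - 1) :
    ∀ (u : Fin n) (c : G.Walk u u), c.IsCycle → c.length = 3 := by
  classical
  intro u c hcy
  set S : Set ℕ := {k : ℕ | ∃ s : Set (Fin n), s.ncard = k ∧
      {e ∈ G.edgeSet | ∀ v ∈ e, v ∈ s}.ncard = 1} with hS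
  have hbdd : BddAbove S := by
    refine ⟨n, ?_⟩
    rintro k ⟨s, hs, -⟩
    calc k = s.ncard := hs.symm
      _ ≤ (Set.univ : Set (Fin n)).ncard := Set.ncard_le_ncard (Set.subset_univ s) Set.finite_univ
      _ = n := by simp [Set.ncard_univ]
  have hne : S.Nonempty := by
    by_contra hemp
    rw [Set.not_nonempty_iff_eq_empty] at hemp
    rw [alpha1, ← hS, hemp, csSup_empty] at ha
    rw [show (⊥ : ℕ) = 0 from rfl] at ha
    omega
  have hmem : n - 1 ∈ S := by
    have := Nat.sSup_mem hne hbdd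
    rwa [show sSup S = n - 1 from ha] at this
  obtain ⟨s, hs, he⟩ := hmem
  -- the missing vertex v
  have hcompl : s.ncard + sᶜ.ncard = n := by
    have := Set.ncard_add_ncard_compl s
    simpa using this
  have hsc : sᶜ.ncard = 1 := by omega
  obtain ⟨v, hv⟩ := Set.ncard_eq_one.mp hsc
  have hmem_s : ∀ w : Fin n, w ∈ s ↔ w ≠ v := by
    intro w
    constructor
    · intro hw hwv
      have : w ∈ sᶜ := by rw [hv]; exact hwv ▸ rfl
      exact this hw
    · intro hwv
      by_contra hws
      have : w ∈ sᶜ := hws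
      rw [hv, Set.mem_singleton_iff] at this
      exact hwv this
  -- the unique edge e₀ avoiding v
  obtain ⟨e₀, he₀⟩ := Set.ncard_eq_one.mp he
  -- every edge of the cycle is e₀ or contains v
  have hedge : ∀ e ∈ c.edges, e = e₀ ∨ v ∈ e := by
    intro e hein
    by_cases hve : v ∈ e
    · exact Or.inr hve
    · left
      have heG : e ∈ G.edgeSet := c.edges_subset_edgeSet hein
      have : e ∈ {e ∈ G.edgeSet | ∀ v ∈ e, v ∈ s} := by
        refine ⟨heG, fun w hw => ?_⟩
        rw [hmem_s]
        rintro rfl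
        exact hve hw
      rw [he₀, Set.mem_singleton_iff] at this
      exact this
  -- count edges containing v : at most 2
  have hcount := walk_countP_edges G v c
  have htail : c.support.count v ≤ (if u = v then 1 else 0) + 1 := by
    rw [c.support_eq_cons, List.count_cons]
    have htn : c.support.tail.Nodup := hcy.2
    have : c.support.tail.count v ≤ 1 := List.nodup_iff_count_le_one.mp htn v
    simp only [beq_iff_eq]
    split_ifs with h1 h2 <;> first | omega | simp_all
  have hc2 : c.edges.countP (fun e => decide (v ∈ e)) ≤ 2 := by
    rcases eq_or_ne u v with huv | huv
    · simp only [if_pos huv] at hcount htail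
      omega
    · simp only [if_neg huv] at hcount htail
      omega
  -- count edges equal to e₀ : at most 1
  have hnodup : c.edges.Nodup := hcy.isCircuit.isTrail.edges_nodup
  have hc1 : c.edges.countP (fun e => e == e₀) ≤ 1 := by
    have := List.nodup_iff_count_le_one.mp hnodup e₀
    rwa [List.count] at this
  -- total
  have hlen : c.length = c.edges.length := (SimpleGraph.Walk.length_edges c).symm
  have hmono : c.edges.countP (fun e => ¬ ((fun e => e == e₀) e)) ≤
      c.edges.countP (fun e => decide (v ∈ e)) := by
    apply List.countP_mono_left
    intro e hein hne
    simp only [Bool.not_eq_true, beq_iff_eq, beq_eq_false_iff_ne, ne_eq,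
      decide_eq_true_eq] at hne ⊢
    rcases hedge e hein with h1 | h1
    · exact absurd h1 hne
    · exact h1
  have hkey : c.edges.length ≤ 3 :=
    calc c.edges.length
        = c.edges.countP (fun e => e == e₀)
          + c.edges.countP (fun e => ¬ ((fun e => e == e₀) e)) :=
          List.length_eq_countP_add_countP _
      _ ≤ 1 + 2 := Nat.add_le_add hc1 (le_trans hmono hc2)
  have h3 : 3 ≤ c.length := hcy.three_le_length
  omega
end

section
/- If G is a connected graph of order n ≥ 3 with α₁(G) = n − 1, then G is isomorphic to the broom B³_n or to the unicyclic graph U_{1,n-1}. -/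
set_option maxHeartbeats 1000000

private lemma unicyclicStar_adj' (n : ℕ) (i j : Fin n) :
    (unicyclicStar n).Adj i j ↔ i ≠ j ∧ (i.val = 0 ∨ j.val = 0 ∨
      ((i.val = 1 ∨ i.val = 2) ∧ (j.val = 1 ∨ j.val = 2))) := Iff.rfl

private lemma broom3_adj' (n : ℕ) (i j : Fin n) :
    (broom3 n).Adj i j ↔ i ≠ j ∧ ((i.val = 0 ∧ j.val = 1) ∨ (i.val = 1 ∧ j.val = 0) ∨
      (i.val = 1 ∧ j.val = 2) ∨ (i.val = 2 ∧ j.val = 1) ∨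
      (i.val = 0 ∧ 3 ≤ j.val) ∨ (j.val = 0 ∧ 3 ≤ i.val)) := Iff.rfl

private lemma walk_closed' {V : Type*} {G : SimpleGraph V} {C : Set V}
    (hC : ∀ a ∈ C, ∀ b, G.Adj a b → b ∈ C) :
    ∀ {u w : V}, G.Walk u w → u ∈ C → w ∈ C := by
  intro u w p
  induction p with
  | nil => exact id
  | cons h _ ih => intro hu; exact ih (hC _ hu _ h)

private lemma exists_neighbor' {V : Type*} {G : SimpleGraph V} (hc : G.Connected)
    {u w : V} (h : u ≠ w) : ∃ z, G.Adj u z := by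
  obtain ⟨p⟩ := hc.preconnected u w
  cases p with
  | nil => exact absurd rfl h
  | cons hadj _ => exact ⟨_, hadj⟩

/-- There is a permutation of `Fin n` sending three given distinct vertices to
`0`, `1`, `2` respectively. -/
private lemma exists_good_equiv (n : ℕ) (hn : 3 ≤ n) (v x y : Fin n)
    (hx : x ≠ v) (hy : y ≠ v) (hxy : x ≠ y) :
    ∃ e : Fin n ≃ Fin n,
      (∀ a, (e a).val = 0 ↔ a = v) ∧ (∀ a, (e a).val = 1 ↔ a = x) ∧
      (∀ a, (e a).val = 2 ↔ a = y) := by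
  have hz0 : (0:ℕ) < n := by omega
  have hz1 : (1:ℕ) < n := by omega
  have hz2 : (2:ℕ) < n := by omega
  set z0 : Fin n := ⟨0, hz0⟩ with hz0d
  set z1 : Fin n := ⟨1, hz1⟩ with hz1d
  set z2 : Fin n := ⟨2, hz2⟩ with hz2d
  have v0 : z0.val = 0 := rfl
  have v1 : z1.val = 1 := rfl
  have v2 : z2.val = 2 := rfl
  have h01 : z0 ≠ z1 := fun h => by rw [Fin.ext_iff, v0, v1] at h; omega
  have h02 : z0 ≠ z2 := fun h => by rw [Fin.ext_iff, v0, v2] at h; omega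
  have h12 : z1 ≠ z2 := fun h => by rw [Fin.ext_iff, v1, v2] at h; omega
  set e1 := Equiv.swap v z0 with he1
  set e2 := Equiv.swap (e1 x) z1 with he2
  set e3 := Equiv.swap (e2 (e1 y)) z2 with he3
  set e : Fin n ≃ Fin n := (e1.trans e2).trans e3 with hed
  have happ : ∀ a, e a = e3 (e2 (e1 a)) := fun a => rfl
  have hv0 : e1 v = z0 := Equiv.swap_apply_left _ _
  have hx0 : e1 x ≠ z0 := fun h => hx (e1.injective (h.trans hv0.symm))
  have hy0 : e1 y ≠ z0 := fun h => hy (e1.injective (h.trans hv0.symm))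
  have hxy1 : e1 x ≠ e1 y := fun h => hxy (e1.injective h)
  have h2z0 : e2 z0 = z0 := Equiv.swap_apply_of_ne_of_ne (Ne.symm hx0) h01
  have h2x : e2 (e1 x) = z1 := Equiv.swap_apply_left _ _
  have h2y0 : e2 (e1 y) ≠ z0 := fun h => hy0 (e2.injective (h.trans h2z0.symm))
  have h2y1 : e2 (e1 y) ≠ z1 := fun h => hxy1 (e2.injective (h2x.trans h.symm))
  have hev : e v = z0 := by
    rw [happ, hv0, h2z0]
    exact Equiv.swap_apply_of_ne_of_ne (Ne.symm h2y0) h02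
  have hex : e x = z1 := by
    rw [happ, h2x]
    exact Equiv.swap_apply_of_ne_of_ne (Ne.symm h2y1) h12
  have hey : e y = z2 := by
    rw [happ]
    exact Equiv.swap_apply_left _ _
  refine ⟨e, fun a => ?_, fun a => ?_, fun a => ?_⟩
  · rw [← v0, Fin.val_eq_val, ← hev, e.apply_eq_iff_eq]
  · rw [← v1, Fin.val_eq_val, ← hex, e.apply_eq_iff_eq]
  · rw [← v2, Fin.val_eq_val, ← hey, e.apply_eq_iff_eq]

private lemma star_case {n : ℕ} (hn : 3 ≤ n) {G : SimpleGraph (Fin n)} {v x y : Fin n}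
    (hx : x ≠ v) (hy : y ≠ v) (hxy : x ≠ y) (hadjxy : G.Adj x y)
    (huniq : ∀ a b, G.Adj a b → a ≠ v → b ≠ v → (a = x ∧ b = y) ∨ (a = y ∧ b = x))
    (hleaf : ∀ u, u ≠ v → u ≠ x → u ≠ y → G.Adj v u)
    (hvx : G.Adj v x) (hvy : G.Adj v y) :
    Nonempty (G ≃g unicyclicStar n) := by
  have hchar : ∀ a b, G.Adj a b ↔ a ≠ b ∧ (a = v ∨ b = v ∨
      ((a = x ∨ a = y) ∧ (b = x ∨ b = y))) := by
    intro a b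
    constructor
    · intro h
      refine ⟨h.ne, ?_⟩
      by_cases hav : a = v
      · exact Or.inl hav
      by_cases hbv : b = v
      · exact Or.inr (Or.inl hbv)
      rcases huniq a b h hav hbv with ⟨rfl, rfl⟩ | ⟨rfl, rfl⟩ <;> tauto
    · rintro ⟨hne, hav | hbv | ⟨hax | hay, hbx | hby⟩⟩
      · subst hav
        by_cases hbx : b = x
        · subst hbx; exact hvx
        by_cases hby : b = y
        · subst hby; exact hvy
        exact hleaf b (Ne.symm hne) hbx hby
      · subst hbv
        by_cases hax : a = x
        · subst hax; exact hvx.symm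
        by_cases hay : a = y
        · subst hay; exact hvy.symm
        exact (hleaf a hne hax hay).symm
      · subst hax; subst hbx; exact absurd rfl hne
      · subst hax; subst hby; exact hadjxy
      · subst hay; subst hbx; exact hadjxy.symm
      · subst hay; subst hby; exact absurd rfl hne
  obtain ⟨e, h0, h1, h2⟩ := exists_good_equiv n hn v x y hx hy hxy
  refine ⟨⟨e, @fun a b => ?_⟩⟩
  rw [unicyclicStar_adj', hchar, h0, h0, h1, h1, h2, h2, ne_eq, e.apply_eq_iff_eq, ← ne_eq]

private lemma broom_case {n : ℕ} (hn : 3 ≤ n) {G : SimpleGraph (Fin n)} {v x y : Fin n}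
    (hx : x ≠ v) (hy : y ≠ v) (hxy : x ≠ y) (hadjxy : G.Adj x y)
    (huniq : ∀ a b, G.Adj a b → a ≠ v → b ≠ v → (a = x ∧ b = y) ∨ (a = y ∧ b = x))
    (hleaf : ∀ u, u ≠ v → u ≠ x → u ≠ y → G.Adj v u)
    (hvx : G.Adj v x) (hvy : ¬ G.Adj v y) :
    Nonempty (G ≃g broom3 n) := by
  have hchar : ∀ a b, G.Adj a b ↔ a ≠ b ∧ ((a = v ∧ b = x) ∨ (a = x ∧ b = v) ∨
      (a = x ∧ b = y) ∨ (a = y ∧ b = x) ∨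
      (a = v ∧ ¬(b = v ∨ b = x ∨ b = y)) ∨ (b = v ∧ ¬(a = v ∨ a = x ∨ a = y))) := by
    intro a b
    constructor
    · intro h
      refine ⟨h.ne, ?_⟩
      by_cases hav : a = v
      · subst hav
        by_cases hbx : b = x
        · subst hbx; tauto
        by_cases hby : b = y
        · subst hby; exact absurd h hvy
        have hbv : b ≠ a := Ne.symm h.ne
        tauto
      by_cases hbv : b = v
      · subst hbv
        by_cases hax : a = x
        · subst hax; tauto
        by_cases hay : a = y
        · subst hay; exact absurd h.symm hvy
        tauto
      rcases huniq a b h hav hbv with ⟨rfl, rfl⟩ | ⟨rfl, rfl⟩ <;> tauto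
    · rintro ⟨hne, ⟨rfl, rfl⟩ | ⟨rfl, rfl⟩ | ⟨rfl, rfl⟩ | ⟨rfl, rfl⟩ | ⟨rfl, hb⟩ | ⟨rfl, ha⟩⟩
      · exact hvx
      · exact hvx.symm
      · exact hadjxy
      · exact hadjxy.symm
      · push_neg at hb; exact hleaf b hb.1 hb.2.1 hb.2.2
      · push_neg at ha; exact (hleaf a ha.1 ha.2.1 ha.2.2).symm
  obtain ⟨e, h0, h1, h2⟩ := exists_good_equiv n hn v x y hx hy hxy
  have h3 : ∀ a, 3 ≤ (e a).val ↔ ¬(a = v ∨ a = x ∨ a = y) := by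
    intro a
    rw [← h0 a, ← h1 a, ← h2 a]
    omega
  refine ⟨⟨e, @fun a b => ?_⟩⟩
  rw [broom3_adj', hchar, h0, h0, h1, h1, h2, h2, h3, h3, ne_eq, e.apply_eq_iff_eq, ← ne_eq]

theorem alpha1_max_connected_characterisation (n : ℕ) (hn : 3 ≤ n)
    (G : SimpleGraph (Fin n)) (hc : G.Connected) (ha : alpha1 G = n - 1) :
    Nonempty (G ≃g broom3 n) ∨ Nonempty (G ≃g unicyclicStar n) := by
  classical
  set A := {k : ℕ | ∃ s : Set (Fin n), s.ncard = k ∧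
      {e ∈ G.edgeSet | ∀ v ∈ e, v ∈ s}.ncard = 1} with hAdef
  have ha' : sSup A = n - 1 := ha
  have hbdd : BddAbove A := by
    refine ⟨n, fun k hk => ?_⟩
    obtain ⟨s, rfl, -⟩ := hk
    have h1 := Set.ncard_le_ncard (Set.subset_univ s) Set.finite_univ
    simpa [Set.ncard_univ] using h1
  have hne : A.Nonempty := by
    rcases Set.eq_empty_or_nonempty A with h | h
    · rw [h, csSup_empty] at ha'
      simp at ha'
      omega
    · exact h
  have hmem : n - 1 ∈ A := ha' ▸ Nat.sSup_mem hne hbdd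
  obtain ⟨s, hscard, hEcard⟩ := hmem
  have hcompl : sᶜ.ncard = 1 := by
    have h1 : s.ncard + sᶜ.ncard = n := by
      have := Set.ncard_add_ncard_compl s
      simpa using this
    omega
  obtain ⟨v, hv⟩ := Set.ncard_eq_one.mp hcompl
  have hsmem : ∀ a, a ∈ s ↔ a ≠ v := by
    intro a
    rw [← Set.notMem_compl_iff, hv, Set.mem_singleton_iff]
  obtain ⟨e₀, he₀⟩ := Set.ncard_eq_one.mp hEcard
  induction e₀ using Sym2.ind with
  | _ x y =>
  have hxyE : s(x, y) ∈ {e ∈ G.edgeSet | ∀ w ∈ e, w ∈ s} := by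
    rw [he₀]; exact Set.mem_singleton _
  have hadjxy : G.Adj x y := hxyE.1
  have hxs : x ∈ s := hxyE.2 x (Sym2.mem_mk_left x y)
  have hys : y ∈ s := hxyE.2 y (Sym2.mem_mk_right x y)
  have hxv : x ≠ v := (hsmem x).mp hxs
  have hyv : y ≠ v := (hsmem y).mp hys
  have hxyne : x ≠ y := hadjxy.ne
  have huniq : ∀ a b, G.Adj a b → a ≠ v → b ≠ v →
      (a = x ∧ b = y) ∨ (a = y ∧ b = x) := by
    intro a b hab hav hbv
    have hmem2 : s(a, b) ∈ {e ∈ G.edgeSet | ∀ w ∈ e, w ∈ s} := by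
      refine ⟨hab, ?_⟩
      intro w hw
      rcases Sym2.mem_iff.mp hw with rfl | rfl
      · exact (hsmem w).mpr hav
      · exact (hsmem w).mpr hbv
    rw [he₀, Set.mem_singleton_iff] at hmem2
    exact Sym2.eq_iff.mp hmem2
  have hleaf : ∀ u, u ≠ v → u ≠ x → u ≠ y → G.Adj v u := by
    intro u huv hux huy
    obtain ⟨w, hw⟩ := exists_neighbor' hc huv
    by_cases hwv : w = v
    · subst hwv; exact hw.symm
    · rcases huniq u w hw huv hwv with ⟨rfl, -⟩ | ⟨rfl, -⟩
      · exact absurd rfl hux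
      · exact absurd rfl huy
  by_cases hvx : G.Adj v x <;> by_cases hvy : G.Adj v y
  · exact Or.inr (star_case hn hxv hyv hxyne hadjxy huniq hleaf hvx hvy)
  · exact Or.inl (broom_case hn hxv hyv hxyne hadjxy huniq hleaf hvx hvy)
  · refine Or.inl (broom_case hn hyv hxv (Ne.symm hxyne) hadjxy.symm
      (fun a b hab hav hbv => (huniq a b hab hav hbv).symm)
      (fun u huv huy hux => hleaf u huv hux huy) hvy hvx)
  · exfalso
    have hclosed : ∀ a ∈ ({x, y} : Set (Fin n)), ∀ b, G.Adj a b →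
        b ∈ ({x, y} : Set (Fin n)) := by
      intro a ha' b hab
      by_cases hbv : b = v
      · subst hbv
        rcases ha' with rfl | rfl
        · exact absurd hab.symm hvx
        · exact absurd hab.symm hvy
      · have hav : a ≠ v := by
          rcases ha' with rfl | rfl
          · exact hxv
          · exact hyv
        rcases huniq a b hab hav hbv with ⟨-, rfl⟩ | ⟨-, rfl⟩
        · exact Or.inr rfl
        · exact Or.inl rfl
    obtain ⟨p⟩ := hc.preconnected x v
    have hvmem : v ∈ ({x, y} : Set (Fin n)) :=
      walk_closed' hclosed p (Or.inl rfl)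
    rcases hvmem with rfl | rfl
    · exact hxv rfl
    · exact hyv rfl
end
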